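/- Fix G > 0 and B_j ≥ 0. The general-SNR revenue function R_i(B_i) = B_i·(ln(1 + G/(B_i + B_j)) − G/(B_i + B_j + G)) has second derivative R_i''(B_i) = −G²·(−B_i² + G·B_i + B_i·B_j + 2·G·B_j + 2·B_j²)/((B_i + B_j + G)³·(B_i + B_j)²); in particular R_i''(B_i) < 0 for all 0 < B_i < G + B_j, so R_i is strictly concave in B_i on (0, G + B_j). -/

import Mathlib

open Real

lemma snr_hd1 (G Bj : ℝ) (hG : 0 < G) (B : ℝ) (hx : 0 < B + Bj) :
    HasDerivAt (fun B : ℝ => B * (log (1 + G / (B + Bj)) - G / (B + Bj + G)))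
      (log (1 + G / (B + Bj)) - G / (B + Bj + G)
        - B * G ^ 2 / ((B + Bj) * (B + Bj + G) ^ 2)) B := by
  have hxg : 0 < B + Bj + G := by linarith
  have h1 : HasDerivAt (fun B : ℝ => B + Bj) 1 B := (hasDerivAt_id B).add_const Bj
  have h2 : HasDerivAt (fun B : ℝ => G / (B + Bj))
      ((0 * (B + Bj) - G * 1) / (B + Bj) ^ 2) B :=
    (hasDerivAt_const B G).div h1 hx.ne'
  have hT : 0 < 1 + G / (B + Bj) := by positivity
  have h4 : HasDerivAt (fun B : ℝ => log (1 + G / (B + Bj)))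
      (((0 * (B + Bj) - G * 1) / (B + Bj) ^ 2) / (1 + G / (B + Bj))) B :=
    (h2.const_add 1).log hT.ne'
  have h5 : HasDerivAt (fun B : ℝ => G / (B + Bj + G))
      ((0 * (B + Bj + G) - G * 1) / (B + Bj + G) ^ 2) B :=
    (hasDerivAt_const B G).div (h1.add_const G) hxg.ne'
  have h := (hasDerivAt_id B).mul (h4.sub h5)
  refine h.congr_deriv ?_
  have hTne : (1 : ℝ) + G / (B + Bj) ≠ 0 := hT.ne'
  simp only [Pi.sub_apply, id]
  field_simp
  ring

lemma snr_hd2 (G Bj : ℝ) (hG : 0 < G) (B : ℝ) (hx : 0 < B + Bj) :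
    HasDerivAt (fun B : ℝ => log (1 + G / (B + Bj)) - G / (B + Bj + G)
        - B * G ^ 2 / ((B + Bj) * (B + Bj + G) ^ 2))
      (-G ^ 2 * (-B ^ 2 + G * B + B * Bj + 2 * G * Bj + 2 * Bj ^ 2) /
          ((B + Bj + G) ^ 3 * (B + Bj) ^ 2)) B := by
  have hxg : 0 < B + Bj + G := by linarith
  have h1 : HasDerivAt (fun B : ℝ => B + Bj) 1 B := (hasDerivAt_id B).add_const Bj
  have h2 : HasDerivAt (fun B : ℝ => G / (B + Bj))
      ((0 * (B + Bj) - G * 1) / (B + Bj) ^ 2) B :=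
    (hasDerivAt_const B G).div h1 hx.ne'
  have hT : 0 < 1 + G / (B + Bj) := by positivity
  have h4 : HasDerivAt (fun B : ℝ => log (1 + G / (B + Bj)))
      (((0 * (B + Bj) - G * 1) / (B + Bj) ^ 2) / (1 + G / (B + Bj))) B :=
    (h2.const_add 1).log hT.ne'
  have h5 : HasDerivAt (fun B : ℝ => G / (B + Bj + G))
      ((0 * (B + Bj + G) - G * 1) / (B + Bj + G) ^ 2) B :=
    (hasDerivAt_const B G).div (h1.add_const G) hxg.ne'
  have hn : HasDerivAt (fun B : ℝ => B * G ^ 2) (1 * G ^ 2) B :=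
    (hasDerivAt_id B).mul_const (G ^ 2)
  have hd : HasDerivAt (fun B : ℝ => (B + Bj) * (B + Bj + G) ^ 2)
      (1 * (B + Bj + G) ^ 2 + (B + Bj) * (2 * (B + Bj + G) ^ 1 * 1)) B :=
    h1.mul ((h1.add_const G).pow 2)
  have hdne : (B + Bj) * (B + Bj + G) ^ 2 ≠ 0 := by positivity
  have h6 := hn.div hd hdne
  have h := (h4.sub h5).sub h6
  refine h.congr_deriv ?_
  have hTne : (1 : ℝ) + G / (B + Bj) ≠ 0 := hT.ne'
  field_simp
  ring

theorem stmt_14 (G Bj : ℝ) (hG : 0 < G) (hBj : 0 ≤ Bj) :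
    (∀ Bi ∈ Set.Ioo (0 : ℝ) (G + Bj),
      deriv (deriv (fun B : ℝ => B * (log (1 + G / (B + Bj)) - G / (B + Bj + G)))) Bi
        = -G ^ 2 * (-Bi ^ 2 + G * Bi + Bi * Bj + 2 * G * Bj + 2 * Bj ^ 2) /
            ((Bi + Bj + G) ^ 3 * (Bi + Bj) ^ 2) ∧
      -G ^ 2 * (-Bi ^ 2 + G * Bi + Bi * Bj + 2 * G * Bj + 2 * Bj ^ 2) /
          ((Bi + Bj + G) ^ 3 * (Bi + Bj) ^ 2) < 0) ∧
    StrictConcaveOn ℝ (Set.Ioo (0 : ℝ) (G + Bj))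
      (fun B : ℝ => B * (log (1 + G / (B + Bj)) - G / (B + Bj + G))) := by
  have hopen : IsOpen {B : ℝ | 0 < B + Bj} := isOpen_lt continuous_const (by continuity)
  have hderiv2 : ∀ Bi : ℝ, 0 < Bi + Bj →
      deriv (deriv (fun B : ℝ => B * (log (1 + G / (B + Bj)) - G / (B + Bj + G)))) Bi
        = -G ^ 2 * (-Bi ^ 2 + G * Bi + Bi * Bj + 2 * G * Bj + 2 * Bj ^ 2) /
            ((Bi + Bj + G) ^ 3 * (Bi + Bj) ^ 2) := by
    intro Bi hx
    have hev : deriv (fun B : ℝ => B * (log (1 + G / (B + Bj)) - G / (B + Bj + G)))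
        =ᶠ[nhds Bi] (fun B : ℝ => log (1 + G / (B + Bj)) - G / (B + Bj + G)
          - B * G ^ 2 / ((B + Bj) * (B + Bj + G) ^ 2)) := by
      filter_upwards [hopen.mem_nhds hx] with B hB
      exact (snr_hd1 G Bj hG B hB).deriv
    rw [hev.deriv_eq]
    exact (snr_hd2 G Bj hG Bi hx).deriv
  have hneg : ∀ Bi ∈ Set.Ioo (0 : ℝ) (G + Bj),
      -G ^ 2 * (-Bi ^ 2 + G * Bi + Bi * Bj + 2 * G * Bj + 2 * Bj ^ 2) /
        ((Bi + Bj + G) ^ 3 * (Bi + Bj) ^ 2) < 0 := by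
    rintro Bi ⟨h0, h1⟩
    have hx : 0 < Bi + Bj := by linarith
    have hden : 0 < (Bi + Bj + G) ^ 3 * (Bi + Bj) ^ 2 := by positivity
    have hnum : -G ^ 2 * (-Bi ^ 2 + G * Bi + Bi * Bj + 2 * G * Bj + 2 * Bj ^ 2) < 0 := by
      nlinarith [mul_pos h0 (by linarith : 0 < G + Bj - Bi), mul_nonneg hBj (by linarith : (0:ℝ) ≤ G + Bj), sq_nonneg G, mul_pos hG hG]
    exact div_neg_of_neg_of_pos hnum hden
  refine ⟨fun Bi hBi => ⟨hderiv2 Bi (by linarith [hBi.1]), hneg Bi hBi⟩, ?_⟩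
  apply strictConcaveOn_of_deriv2_neg (convex_Ioo _ _)
  · intro B hB
    have hx : 0 < B + Bj := by linarith [hB.1]
    exact (snr_hd1 G Bj hG B hx).continuousAt.continuousWithinAt
  · intro B hB
    rw [interior_Ioo] at hB
    have hx : 0 < B + Bj := by linarith [hB.1]
    show deriv (deriv _) B < 0
    rw [hderiv2 B hx]
    exact hneg B hB
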